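/- There is an absolute constant C with the following property. Let Δ be a finite alphabet, let m ≥ 1, and let x : ℕ → Δ be a sequence generated by a Fibonacci-DFAO with at most m states. Then for every n ≥ 1, the number of distinct factors of length n of x — that is, the number of distinct tuples (x(i), x(i+1), …, x(i+n−1)) over all i ≥ 0 — is at most C·n·m². -/

import Mathlib

/-- The Fibonacci (Zeckendorf) value of a binary word written msd-first:
`[x₁⋯x_ℓ] = Σ_j x_j · F_{ℓ−j+2}`. -/
def fibVal : List Bool → ℕ
  | [] => 0
  | a :: rest => (if a then Nat.fib (rest.length + 2) else 0) + fibVal rest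

/-- A binary word is a valid Fibonacci representation if it has no factor `11`. -/
def ValidFib (w : List Bool) : Prop :=
  w.Chain' (fun a b => a = false ∨ b = false)

/-- A deterministic finite automaton with output (DFAO). -/
structure DFAO (α : Type*) (σ : Type*) (Δ : Type*) where
  step : σ → α → σ
  start : σ
  out : σ → Δ

/-- The output of a DFAO on an input word. -/
def DFAO.eval {α σ Δ : Type*} (M : DFAO α σ Δ) (w : List α) : Δ :=
  M.out (w.foldl M.step M.start)

/-- `h : ℕ → Δ` is generated by a Fibonacci-DFAO with at most `m` states:
there is a DFAO with input alphabet `{0,1}` and at most `m` states whose output on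
every valid Fibonacci representation `w` (leading zeros allowed) is `h [w]`. -/
def FibGeneratedBy {Δ : Type*} (h : ℕ → Δ) (m : ℕ) : Prop :=
  ∃ (σ : Type) (_ : Fintype σ) (M : DFAO Bool σ Δ),
    Fintype.card σ ≤ m ∧ ∀ w : List Bool, ValidFib w → M.eval w = h (fibVal w)

open List

lemma fibVal_replicate (L : ℕ) : fibVal (List.replicate L false) = 0 := by
  induction L with
  | zero => rfl
  | succ L ih => simp [List.replicate_succ, fibVal, ih]

lemma fibVal_append (u v : List Bool) :
    fibVal (u ++ v) = fibVal (u ++ List.replicate v.length false) + fibVal v := by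
  induction u with
  | nil => simp [fibVal_replicate]
  | cons a u ih =>
      simp only [List.cons_append, fibVal, List.append_eq]
      rw [ih]
      have hlen : (u ++ List.replicate v.length false).length = (u ++ v).length := by simp
      rw [hlen]
      omega

lemma le_fib2 : ∀ n, n ≤ Nat.fib (n + 2) := by
  intro n
  induction n with
  | zero => simp
  | succ n ih =>
      have h1 : 0 < Nat.fib (n + 1) := Nat.fib_pos.mpr (by omega)
      have h2 : Nat.fib (n + 3) = Nat.fib (n + 1) + Nat.fib (n + 2) := Nat.fib_add_two
      show n + 1 ≤ Nat.fib (n + 3)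
      omega

/-- length-`L` Zeckendorf representation of `s` (msd first), valid for `s < fib (L+2)`. -/
def rep : ℕ → ℕ → List Bool
  | 0, _ => []
  | (L + 1), s =>
      if Nat.fib (L + 2) ≤ s then true :: rep L (s - Nat.fib (L + 2)) else false :: rep L s

lemma rep_length : ∀ L s, (rep L s).length = L := by
  intro L
  induction L with
  | zero => intro s; rfl
  | succ L ih =>
      intro s
      by_cases h : Nat.fib (L + 2) ≤ s <;> simp [rep, h, ih]

lemma rep_lt_head (L s : ℕ) (h : s < Nat.fib (L + 2)) :
    rep (L + 1) s = false :: rep L s := by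
  simp [rep, Nat.not_le.mpr h]

lemma fibVal_rep : ∀ L s, s < Nat.fib (L + 2) → fibVal (rep L s) = s := by
  intro L
  induction L with
  | zero =>
      intro s hs
      simp [Nat.fib] at hs
      simp [rep, fibVal]
      omega
  | succ L ih =>
      intro s hs
      have hs' : s < Nat.fib (L + 3) := hs
      have hf : Nat.fib (L + 3) = Nat.fib (L + 1) + Nat.fib (L + 2) := Nat.fib_add_two
      have hm : Nat.fib (L + 1) ≤ Nat.fib (L + 2) := Nat.fib_mono (by omega)
      by_cases h : Nat.fib (L + 2) ≤ s
      · have h2 : s - Nat.fib (L + 2) < Nat.fib (L + 2) := by omega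
        simp only [rep, if_pos h]
        simp only [fibVal, rep_length, if_true]
        rw [ih _ h2]
        omega
      · simp only [rep, if_neg h]
        simp only [fibVal, rep_length]
        rw [ih _ (by omega)]
        simp

lemma rep_valid : ∀ L s, s < Nat.fib (L + 2) → ValidFib (rep L s) := by
  intro L
  induction L with
  | zero => intro s _; exact List.isChain_nil
  | succ L ih =>
      intro s hs
      have hs' : s < Nat.fib (L + 3) := hs
      have hf : Nat.fib (L + 3) = Nat.fib (L + 1) + Nat.fib (L + 2) := Nat.fib_add_two
      have hm : Nat.fib (L + 1) ≤ Nat.fib (L + 2) := Nat.fib_mono (by omega)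
      by_cases h : Nat.fib (L + 2) ≤ s
      · have h1 : s - Nat.fib (L + 2) < Nat.fib (L + 1) := by omega
        simp only [rep, if_pos h]
        cases L with
        | zero => simp [rep, ValidFib]; exact List.isChain_singleton _
        | succ L' =>
            have h1' : s - Nat.fib (L' + 3) < Nat.fib (L' + 2) := h1
            have hv : ValidFib (rep (L' + 1) (s - Nat.fib (L' + 3))) :=
              ih _ (lt_of_lt_of_le h1' (Nat.fib_mono (by omega)))
            have hh := rep_lt_head L' _ h1'
            show ValidFib (true :: rep (L' + 1) (s - Nat.fib (L' + 3)))
            rw [hh] at hv ⊢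
            exact List.IsChain.cons_cons (Or.inr rfl) hv
      · simp only [rep, if_neg h]
        have hv := ih s (by omega)
        cases hL : rep L s with
        | nil => exact List.isChain_singleton _
        | cons b t =>
            refine List.IsChain.cons_cons (Or.inl rfl) ?_
            rw [hL] at hv; exact hv

lemma fibVal_lt_aux : ∀ v : List Bool, ValidFib v →
    fibVal v < Nat.fib (v.length + 2) ∧
      (v.headI = false → fibVal v < Nat.fib (v.length + 1)) := by
  intro v
  induction v with
  | nil =>
      intro _
      refine ⟨?_, fun _ => ?_⟩ <;> · show (0:ℕ) < _; simp [Nat.fib_pos]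
  | cons a t ih =>
      intro hv
      obtain ⟨h1, h2⟩ := ih hv.tail
      have hf : Nat.fib (t.length + 3) = Nat.fib (t.length + 1) + Nat.fib (t.length + 2) :=
        Nat.fib_add_two
      have hg1 : (a :: t).length + 2 = t.length + 3 := by
        simp only [List.length_cons]
      have hg2 : (a :: t).length + 1 = t.length + 2 := by
        simp only [List.length_cons]
      rw [hg1, hg2]
      cases a with
      | false =>
          have e : fibVal (false :: t) = fibVal t := by simp [fibVal]
          rw [e]
          have hm : Nat.fib (t.length + 2) ≤ Nat.fib (t.length + 3) := Nat.fib_mono (by omega)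
          exact ⟨by omega, fun _ => h1⟩
      | true =>
          have ht : t.headI = false := by
            cases t with
            | nil => rfl
            | cons b t' =>
                rcases (List.isChain_cons_cons.mp hv).1 with h | h
                · exact absurd h (by simp)
                · simp [h]
          have e : fibVal (true :: t) = Nat.fib (t.length + 2) + fibVal t := by simp [fibVal]
          rw [e]
          refine ⟨by have := h2 ht; omega, fun hh => by simp at hh⟩

lemma fibVal_lt (v : List Bool) (hv : ValidFib v) : fibVal v < Nat.fib (v.length + 2) :=
  (fibVal_lt_aux v hv).1

lemma fibVal_lt_head (v : List Bool) (hv : ValidFib v) (h : v.headI = false) :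
    fibVal v < Nat.fib (v.length + 1) :=
  (fibVal_lt_aux v hv).2 h

lemma fibVal_pair (u : List Bool) (a b : Bool) (L : ℕ) :
    fibVal (u ++ ([a, b] ++ List.replicate L false)) =
      fibVal (u ++ List.replicate (L + 2) false)
        + ((if a then Nat.fib (L + 3) else 0) + (if b then Nat.fib (L + 2) else 0)) := by
  rw [fibVal_append u ([a, b] ++ List.replicate L false)]
  have hlen : ([a, b] ++ List.replicate L false).length = L + 2 := by simp only [List.length_append, List.length_replicate, List.length_cons, List.length_nil]; omega
  rw [hlen]
  congr 1
  show fibVal (a :: b :: List.replicate L false) = _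
  cases a <;> cases b <;> simp [fibVal, fibVal_replicate]

lemma fibVal_single (u : List Bool) (a : Bool) (L : ℕ) :
    fibVal (u ++ ([a] ++ List.replicate L false)) =
      fibVal (u ++ List.replicate (L + 1) false) + (if a then Nat.fib (L + 2) else 0) := by
  rw [fibVal_append u ([a] ++ List.replicate L false)]
  have hlen : ([a] ++ List.replicate L false).length = L + 1 := by simp only [List.length_append, List.length_replicate, List.length_cons, List.length_nil]; omega
  rw [hlen]
  congr 1
  show fibVal (a :: List.replicate L false) = _
  cases a <;> simp [fibVal, fibVal_replicate]

lemma fibVal_tf (u : List Bool) (L : ℕ) :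
    fibVal (u ++ ([true, false] ++ List.replicate L false)) =
      fibVal (u ++ List.replicate (L + 2) false) + Nat.fib (L + 3) := by
  simpa using fibVal_pair u true false L

lemma fibVal_ft (u : List Bool) (L : ℕ) :
    fibVal (u ++ ([false, true] ++ List.replicate L false)) =
      fibVal (u ++ List.replicate (L + 2) false) + Nat.fib (L + 2) := by
  simpa using fibVal_pair u false true L

lemma fibVal_ff (u : List Bool) (L : ℕ) :
    fibVal (u ++ ([false, false] ++ List.replicate L false)) =
      fibVal (u ++ List.replicate (L + 2) false) := by
  simpa using fibVal_pair u false false L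

lemma bump : ∀ (N : ℕ) (u : List Bool), u.length ≤ N → ValidFib u →
    u.getLast? = some true →
    ∃ B : List Bool, ValidFib B ∧ B.getLast? = some false ∧
      ∀ L, fibVal (B ++ List.replicate L false) =
        fibVal (u ++ List.replicate L false) + Nat.fib (L + 1) := by
  intro N
  induction N with
  | zero =>
      intro u hlen _ hlast
      have : u = [] := List.length_eq_zero_iff.mp (by omega)
      subst this
      simp at hlast
  | succ N ih =>
      intro u hlen hu hlast
      rcases List.eq_nil_or_concat u with rfl | ⟨u₀, a, rfl⟩
      · simp at hlast
      · simp only [List.concat_eq_append] at hlen hu hlast ⊢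
        rw [List.getLast?_concat] at hlast
        have ha : a = true := by simpa using hlast
        subst ha
        rcases List.eq_nil_or_concat u₀ with rfl | ⟨u₁, b, rfl⟩
        · -- u = [true]
          refine ⟨[true, false], ?_, rfl, ?_⟩
          · exact List.isChain_cons_cons.mpr ⟨Or.inr rfl, List.isChain_singleton _⟩
          · intro L
            have h1 := fibVal_tf [] L
            have h2 := fibVal_single [] true L
            simp only [List.nil_append] at h1 h2
            show fibVal ([true, false] ++ List.replicate L false) =
              fibVal ([true] ++ List.replicate L false) + Nat.fib (L + 1)
            rw [h1, h2]
            have e1 : fibVal (List.replicate (L + 2) false) = 0 := fibVal_replicate _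
            have e2 : fibVal (List.replicate (L + 1) false) = 0 := fibVal_replicate _
            have e3 : Nat.fib (L + 3) = Nat.fib (L + 1) + Nat.fib (L + 2) := Nat.fib_add_two
            simp only [e1, e2, e3, if_true]
            omega
        · -- u = u₁ ++ [b] ++ [true], validity forces b = false
          simp only [List.concat_eq_append] at hlen hu ⊢
          have hb : b = false := by
            have h := (List.isChain_append.mp hu).2.2
            have := h b (by simp) true (by rfl)
            rcases this with h' | h'
            · exact h'
            · exact absurd h' (by simp)
          subst hb
          have huu : u₁ ++ [false] ++ [true] = u₁ ++ [false, true] := by simp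
          have hchain : ValidFib (u₁ ++ [false, true]) := by rw [← huu]; exact hu
          have hu₁ : ValidFib u₁ := (List.isChain_append.mp hchain).1
          have hval : ∀ L, fibVal (u₁ ++ [false] ++ [true] ++ List.replicate L false)
              + Nat.fib (L + 1)
              = fibVal (u₁ ++ List.replicate (L + 2) false) + Nat.fib (L + 3) := by
            intro L
            have h1 := fibVal_ft u₁ L
            have e3 : Nat.fib (L + 3) = Nat.fib (L + 1) + Nat.fib (L + 2) := Nat.fib_add_two
            have happ : u₁ ++ [false] ++ [true] ++ List.replicate L false
                = u₁ ++ ([false, true] ++ List.replicate L false) := by simp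
            rw [happ, h1]
            omega
          have hBval : ∀ L, fibVal ((u₁ ++ [true, false]) ++ List.replicate L false)
              = fibVal ((u₁ ++ [false] ++ [true]) ++ List.replicate L false)
                + Nat.fib (L + 1) := by
            intro L
            have h2 := fibVal_tf u₁ L
            have happ : (u₁ ++ [true, false]) ++ List.replicate L false
                = u₁ ++ ([true, false] ++ List.replicate L false) := by simp
            rw [happ, h2]
            have := hval L
            omega
          rcases hlast1 : u₁.getLast? with _ | c
          · refine ⟨u₁ ++ [true, false], ?_, ?_, hBval⟩
            · refine List.isChain_append.mpr ⟨hu₁, ?_, ?_⟩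
              · exact List.isChain_cons_cons.mpr ⟨Or.inr rfl, List.isChain_singleton _⟩
              · intro x hx; rw [hlast1] at hx; simp at hx
            · have e : u₁ ++ [true, false] = (u₁ ++ [true]) ++ [false] := by simp
              rw [e]; exact List.getLast?_concat
          · cases c
            · refine ⟨u₁ ++ [true, false], ?_, ?_, hBval⟩
              · refine List.isChain_append.mpr ⟨hu₁, ?_, ?_⟩
                · exact List.isChain_cons_cons.mpr ⟨Or.inr rfl, List.isChain_singleton _⟩
                · intro x hx y hy
                  rw [hlast1] at hx
                  simp at hx
                  subst hx
                  exact Or.inl rfl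
              · have e : u₁ ++ [true, false] = (u₁ ++ [true]) ++ [false] := by simp
                rw [e]; exact List.getLast?_concat
            · -- u₁ ends true : recurse
              have hlen1 : u₁.length ≤ N := by
                have : (u₁ ++ [false] ++ [true]).length = u₁.length + 2 := by simp
                omega
              obtain ⟨B₁, hB₁v, hB₁l, hB₁val⟩ := ih u₁ hlen1 hu₁ hlast1
              refine ⟨B₁ ++ [false, false], ?_, ?_, ?_⟩
              · refine List.isChain_append.mpr ⟨hB₁v, ?_, ?_⟩
                · exact List.isChain_cons_cons.mpr ⟨Or.inl rfl, List.isChain_singleton _⟩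
                · intro x hx y hy
                  rw [hB₁l] at hx
                  simp at hx
                  subst hx
                  exact Or.inl rfl
              · have e : B₁ ++ [false, false] = (B₁ ++ [false]) ++ [false] := by simp
                rw [e]; exact List.getLast?_concat
              · intro L
                have h2 := fibVal_ff B₁ L
                have happ : (B₁ ++ [false, false]) ++ List.replicate L false
                    = B₁ ++ ([false, false] ++ List.replicate L false) := by simp
                rw [happ, h2]
                have h3 := hB₁val (L + 2)
                have h4 := hval L
                have e3 : Nat.fib (L + 2 + 1) = Nat.fib (L + 3) := by norm_num
                omega

lemma split_exists (ℓ i : ℕ) (hℓ : 2 ≤ ℓ) :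
    ∃ (L : ℕ) (u v : List Bool),
      (L = ℓ ∨ L = ℓ + 1) ∧ ValidFib u ∧ ValidFib v ∧ v.length = L ∧
      v.headI = false ∧
      i = fibVal (u ++ List.replicate L false) + fibVal v := by
  set K := i + ℓ + 2 with hK
  have hiK : i < Nat.fib (K + 2) := by
    have h1 := le_fib2 i
    have h2 : Nat.fib (i + 3) = Nat.fib (i + 1) + Nat.fib (i + 2) := Nat.fib_add_two
    have h3 : 0 < Nat.fib (i + 1) := Nat.fib_pos.mpr (by omega)
    have h4 : Nat.fib (i + 3) ≤ Nat.fib (K + 2) := Nat.fib_mono (by omega)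
    omega
  have hwv : ValidFib (rep K i) := rep_valid K i hiK
  have hwval : fibVal (rep K i) = i := fibVal_rep K i hiK
  have hwlen : (rep K i).length = K := rep_length K i
  set u₁ := (rep K i).take (i + 1) with hu₁def
  set v₁ := (rep K i).drop (i + 1) with hv₁def
  have hsplit : u₁ ++ v₁ = rep K i := List.take_append_drop _ _
  have hv₁len : v₁.length = ℓ + 1 := by
    rw [hv₁def, List.length_drop, hwlen]; omega
  have hchain : ValidFib (u₁ ++ v₁) := by rw [hsplit]; exact hwv
  obtain ⟨hu₁v, hv₁v, hbd⟩ := List.isChain_append.mp hchain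
  cases hv₁e : v₁ with
  | nil => rw [hv₁e] at hv₁len; simp at hv₁len
  | cons a t =>
    cases a with
    | false =>
        refine ⟨ℓ + 1, u₁, v₁, Or.inr rfl, hu₁v, hv₁v, hv₁len, by rw [hv₁e]; rfl, ?_⟩
        have := fibVal_append u₁ v₁
        rw [hsplit, hwval, hv₁len] at this
        exact this
    | true =>
        cases t with
        | nil =>
            rw [hv₁e] at hv₁len; simp at hv₁len; omega
        | cons b t' =>
            have hb : b = false := by
              rw [hv₁e] at hv₁v
              rcases (List.isChain_cons_cons.mp hv₁v).1 with h | h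
              · exact absurd h (by simp)
              · exact h
            subst hb
            have htlen : (false :: t').length = ℓ := by
              rw [hv₁e] at hv₁len
              simp at hv₁len ⊢
              omega
            refine ⟨ℓ, u₁ ++ [true], false :: t', Or.inl rfl, ?_, ?_, htlen, rfl, ?_⟩
            · refine List.isChain_append.mpr ⟨hu₁v, List.isChain_singleton _, ?_⟩
              intro xx hx y hy
              have := hbd xx hx true (by rw [hv₁e]; rfl)
              rcases this with h | h
              · exact Or.inl h
              · exact absurd h (by simp)
            · rw [hv₁e] at hv₁v
              exact hv₁v.tail
            · have happ : u₁ ++ v₁ = (u₁ ++ [true]) ++ (false :: t') := by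
                rw [hv₁e]; simp
              have := fibVal_append (u₁ ++ [true]) (false :: t')
              rw [← happ, hsplit, hwval, htlen] at this
              exact this

lemma count_aux {α : Type*} {β : Type*} [Fintype β] (T : Set α) (G : β → α)
    (h : ∀ a ∈ T, ∃ b, G b = a) : T.ncard ≤ Fintype.card β := by
  have hsub : T ⊆ Set.range G := fun a ha => (h a ha)
  calc T.ncard ≤ (Set.range G).ncard := Set.ncard_le_ncard hsub (Set.finite_range G)
    _ = Nat.card (Set.range G) := rfl
    _ ≤ Nat.card β := Finite.card_range_le G
    _ = Fintype.card β := Nat.card_eq_fintype_card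

theorem subword_complexity_bound :
    ∃ C : ℕ, ∀ (Δ : Type) (_ : Fintype Δ) (m : ℕ), 1 ≤ m →
      ∀ x : ℕ → Δ, FibGeneratedBy x m →
        ∀ n : ℕ, 1 ≤ n →
          Set.ncard {f : Fin n → Δ | ∃ i : ℕ, ∀ j : Fin n, f j = x (i + (j : ℕ))} ≤
            C * n * m ^ 2 := by
  classical
  use 52
  intro Δ _ m hm x hx n hn
  obtain ⟨σ, hσfin, M, hcard, hM⟩ := hx
  letI := hσfin
  have hex : ∃ k, 4 ≤ k ∧ n ≤ Nat.fib k :=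
    ⟨n + 4, by omega, le_trans (le_fib2 n) (Nat.fib_mono (by omega))⟩
  set ℓ := Nat.find hex with hℓdef
  obtain ⟨hℓ4, hℓn⟩ := Nat.find_spec hex
  -- the decoding function
  refine le_trans (count_aux _
    (fun p : Bool × Bool × Fin (Nat.fib (ℓ + 3)) × σ × σ => fun j : Fin n =>
      if p.2.1 = true ∧ Nat.fib ((if p.1 then ℓ + 1 else ℓ) + 1) ≤ (p.2.2.1 : ℕ) + (j : ℕ) then
        M.out ((rep (if p.1 then ℓ + 1 else ℓ)
          ((p.2.2.1 : ℕ) + (j : ℕ) - Nat.fib ((if p.1 then ℓ + 1 else ℓ) + 1))).foldl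
            M.step p.2.2.2.2)
      else
        M.out ((rep (if p.1 then ℓ + 1 else ℓ)
          ((p.2.2.1 : ℕ) + (j : ℕ))).foldl M.step p.2.2.2.1)) ?_) ?_
  · -- every factor is decoded by some signature
    rintro f ⟨i, hf⟩
    obtain ⟨L, u, v, hL, hu, hv, hvlen, hvhd, hiv⟩ := split_exists ℓ i (by omega)
    set r := fibVal v with hrdef
    set A := fibVal (u ++ List.replicate L false) with hAdef
    have hLl : ℓ ≤ L := by rcases hL with h | h <;> omega
    have hr : r < Nat.fib (L + 1) := by
      have := fibVal_lt_head v hv hvhd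
      rw [hvlen] at this
      exact this
    have hrfin : r < Nat.fib (ℓ + 3) :=
      lt_of_lt_of_le hr (Nat.fib_mono (by omega))
    have hnL : n ≤ Nat.fib L := le_trans hℓn (Nat.fib_mono hLl)
    -- bump data
    obtain ⟨B, hB⟩ : ∃ B : List Bool, u.getLast? = some true →
        (ValidFib B ∧ B.getLast? = some false ∧
          ∀ L', fibVal (B ++ List.replicate L' false) =
            fibVal (u ++ List.replicate L' false) + Nat.fib (L' + 1)) := by
      by_cases he : u.getLast? = some true
      · obtain ⟨B, h1, h2, h3⟩ := bump u.length u le_rfl hu he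
        exact ⟨B, fun _ => ⟨h1, h2, h3⟩⟩
      · exact ⟨[], fun h => absurd h he⟩
    refine ⟨⟨decide (L = ℓ + 1), decide (u.getLast? = some true), ⟨r, hrfin⟩,
      u.foldl M.step M.start, B.foldl M.step M.start⟩, ?_⟩
    funext j
    have hLif2 : (if L = ℓ + 1 then ℓ + 1 else ℓ) = L := by
      rcases hL with h | h
      · rw [h, if_neg (by omega)]
      · rw [h, if_pos rfl]
    simp only [Fin.val_mk, decide_eq_true_eq]
    rw [hLif2, hf j]
    have hjn : (j : ℕ) < n := j.isLt
    have hfib2 : Nat.fib (L + 2) = Nat.fib L + Nat.fib (L + 1) := Nat.fib_add_two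
    have hrj : r + (j : ℕ) < Nat.fib (L + 2) := by omega
    by_cases hc : u.getLast? = some true ∧ Nat.fib (L + 1) ≤ r + (j : ℕ)
    · rw [if_pos hc]
      obtain ⟨hBv, hBl, hBval⟩ := hB hc.1
      set s := r + (j : ℕ) - Nat.fib (L + 1) with hsdef
      have hs2 : s < Nat.fib (L + 2) := by omega
      have hWv : ValidFib (B ++ rep L s) := by
        refine List.isChain_append.mpr ⟨hBv, rep_valid L s hs2, ?_⟩
        intro xx hx y hy
        rw [hBl] at hx
        simp at hx
        subst hx
        exact Or.inl rfl
      have hWval : fibVal (B ++ rep L s) = i + (j : ℕ) := by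
        have h1 := fibVal_append B (rep L s)
        rw [rep_length, fibVal_rep L s hs2, hBval L] at h1
        omega
      have := hM _ hWv
      rw [hWval] at this
      rw [← this]
      rw [DFAO.eval, List.foldl_append]
    · rw [if_neg hc]
      have hrj2 : u.getLast? = some true → r + (j : ℕ) < Nat.fib (L + 1) := by
        intro h
        by_contra hh
        exact hc ⟨h, by omega⟩
      have hWv : ValidFib (u ++ rep L (r + (j : ℕ))) := by
        refine List.isChain_append.mpr ⟨hu, rep_valid L _ hrj, ?_⟩
        intro xx hx y hy
        cases xx with
        | false => exact Or.inl rfl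
        | true =>
            refine Or.inr ?_
            have hxx : u.getLast? = some true := hx
            have hlt := hrj2 hxx
            obtain ⟨L'', rfl⟩ : ∃ L'', L = L'' + 1 := ⟨L - 1, by omega⟩
            rw [rep_lt_head L'' _ hlt] at hy
            simp at hy
            exact hy
      have hWval : fibVal (u ++ rep L (r + (j : ℕ))) = i + (j : ℕ) := by
        have h1 := fibVal_append u (rep L (r + (j : ℕ)))
        rw [rep_length, fibVal_rep L _ hrj] at h1
        omega
      have := hM _ hWv
      rw [hWval] at this
      rw [← this]
      rw [DFAO.eval, List.foldl_append]
  · -- cardinality bound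
    have h13 : Nat.fib (ℓ + 3) ≤ 13 * n := by
      rcases Nat.lt_or_ge ℓ 5 with h5 | h5
      · have hl4 : ℓ = 4 := by omega
        have h13' : Nat.fib (ℓ + 3) = 13 := by rw [hl4]; decide
        omega
      · obtain ⟨k, hk⟩ : ∃ k, ℓ = k + 5 := ⟨ℓ - 5, by omega⟩
        have hmin : ¬(4 ≤ k + 4 ∧ n ≤ Nat.fib (k + 4)) := Nat.find_min hex (by omega)
        have hk8 : ℓ + 3 = k + 8 := by omega
        rw [hk8]
        have hflt : Nat.fib (k + 4) < n := by
          rcases Nat.lt_or_ge (Nat.fib (k + 4)) n with h | h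
          · exact h
          · exact absurd ⟨by omega, h⟩ hmin
        have e1 : Nat.fib (k + 8) = Nat.fib (k + 6) + Nat.fib (k + 7) := Nat.fib_add_two
        have e2 : Nat.fib (k + 7) = Nat.fib (k + 5) + Nat.fib (k + 6) := Nat.fib_add_two
        have e3 : Nat.fib (k + 6) = Nat.fib (k + 4) + Nat.fib (k + 5) := Nat.fib_add_two
        have e4 : Nat.fib (k + 5) = Nat.fib (k + 3) + Nat.fib (k + 4) := Nat.fib_add_two
        have e5 : Nat.fib (k + 3) ≤ Nat.fib (k + 4) := Nat.fib_le_fib_succ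
        show Nat.fib (k + 8) ≤ 13 * n
        omega
    have hcardeq : Fintype.card (Bool × Bool × Fin (Nat.fib (ℓ + 3)) × σ × σ)
        = 2 * (2 * (Nat.fib (ℓ + 3) * (Fintype.card σ * Fintype.card σ))) := by
      simp [Fintype.card_prod]
    rw [hcardeq]
    calc 2 * (2 * (Nat.fib (ℓ + 3) * (Fintype.card σ * Fintype.card σ)))
        = 4 * Nat.fib (ℓ + 3) * (Fintype.card σ * Fintype.card σ) := by ring
      _ ≤ 4 * (13 * n) * (m * m) := by
          exact Nat.mul_le_mul (Nat.mul_le_mul le_rfl h13) (Nat.mul_le_mul hcard hcard)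
      _ = 52 * n * m ^ 2 := by ring
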